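/- Let a, b ∈ k with a ≠ 0 and b ≠ 0, and let I be the ideal of k[x,y] generated by x² − bxy², xy³, and y³ + axy² − aby⁴. Then the images of the seven monomials 1, y, y², y³, x, xy, xy² in the quotient ring k[x,y]/I are linearly independent over k; in particular dim_k k[x,y]/I ≥ 7, whereas dim_k k[x,y]/(x², y³) = 6. -/

import Mathlib

open MvPolynomial

noncomputable section

namespace Stmt9Aux
variable {k : Type*} [Field k] {n : ℕ}

section generic
variable (Lx Ly : Module.End k (Fin n → k)) (e0 : Fin n → k)

def w (m : Fin 2 →₀ ℕ) : Fin n → k := (Lx ^ (m 0) * Ly ^ (m 1)) e0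

def T : MvPolynomial (Fin 2) k →ₗ[k] (Fin n → k) :=
  (Finsupp.lsum k fun m => LinearMap.toSpanSingleton k _ (w Lx Ly e0 m)) ∘ₗ
    (AddMonoidAlgebra.coeffLinearEquiv k).toLinearMap

lemma Tmon (m : Fin 2 →₀ ℕ) (c : k) :
    T Lx Ly e0 (monomial m c) = c • w Lx Ly e0 m := by
  rw [← single_eq_monomial]
  exact (Finsupp.lsum_single k _ m c).trans (LinearMap.toSpanSingleton_apply _ _ _ _)

lemma Tone : T Lx Ly e0 1 = e0 := by
  have : (1 : MvPolynomial (Fin 2) k) = monomial 0 1 := by simp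
  rw [this, Tmon]
  simp [w]

lemma TX0 (p : MvPolynomial (Fin 2) k) :
    T Lx Ly e0 (X 0 * p) = Lx (T Lx Ly e0 p) := by
  induction p using MvPolynomial.induction_on' with
  | add p q hp hq => rw [mul_add, map_add, hp, hq, ← map_add, ← map_add]
  | monomial m c =>
    have hX : (X 0 : MvPolynomial (Fin 2) k) = monomial (Finsupp.single 0 (1 : ℕ)) 1 := by
      rw [← X_pow_eq_monomial, pow_one]
    have h0 : (Finsupp.single (0 : Fin 2) (1 : ℕ) + m) 0 = 1 + m 0 := by
      simp [Finsupp.add_apply]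
    have h1 : (Finsupp.single (0 : Fin 2) (1 : ℕ) + m) 1 = m 1 := by
      simp [Finsupp.add_apply, Finsupp.single_apply]
    rw [hX, monomial_mul, one_mul, Tmon, Tmon, map_smul]
    congr 1
    rw [w, w, h0, h1, pow_add, pow_one, mul_assoc, Module.End.mul_apply]

lemma TX1 (hc : Commute Lx Ly) (p : MvPolynomial (Fin 2) k) :
    T Lx Ly e0 (X 1 * p) = Ly (T Lx Ly e0 p) := by
  induction p using MvPolynomial.induction_on' with
  | add p q hp hq => rw [mul_add, map_add, hp, hq, ← map_add, ← map_add]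
  | monomial m c =>
    have hX : (X 1 : MvPolynomial (Fin 2) k) = monomial (Finsupp.single 1 (1 : ℕ)) 1 := by
      rw [← X_pow_eq_monomial, pow_one]
    have h0 : (Finsupp.single (1 : Fin 2) (1 : ℕ) + m) 0 = m 0 := by
      simp [Finsupp.add_apply, Finsupp.single_apply]
    have h1 : (Finsupp.single (1 : Fin 2) (1 : ℕ) + m) 1 = 1 + m 1 := by
      simp [Finsupp.add_apply]
    rw [hX, monomial_mul, one_mul, Tmon, Tmon, map_smul]
    congr 1
    rw [w, w, h0, h1, pow_add, pow_one]
    have : Lx ^ (m 0) * (Ly * Ly ^ (m 1)) = Ly * (Lx ^ (m 0) * Ly ^ (m 1)) := by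
      rw [← mul_assoc, ← (hc.symm.pow_right (m 0)).eq, mul_assoc]
    rw [this, Module.End.mul_apply]

lemma TXpow1 (hc : Commute Lx Ly) (j : ℕ) (p : MvPolynomial (Fin 2) k) :
    T Lx Ly e0 (X 1 ^ j * p) = (Ly ^ j) (T Lx Ly e0 p) := by
  induction j with
  | zero => simp
  | succ j hj =>
    rw [pow_succ', mul_assoc, TX1 _ _ _ hc, hj, pow_succ', Module.End.mul_apply]

lemma TXpow0 (i : ℕ) (p : MvPolynomial (Fin 2) k) :
    T Lx Ly e0 (X 0 ^ i * p) = (Lx ^ i) (T Lx Ly e0 p) := by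
  induction i with
  | zero => simp
  | succ i hi =>
    rw [pow_succ', mul_assoc, TX0, hi, pow_succ', Module.End.mul_apply]

lemma Tqg (hc : Commute Lx Ly) (g : MvPolynomial (Fin 2) k)
    (hg : T Lx Ly e0 g = 0) (q : MvPolynomial (Fin 2) k) :
    T Lx Ly e0 (q * g) = 0 := by
  induction q using MvPolynomial.induction_on' with
  | add p q hp hq => rw [add_mul, map_add, hp, hq, add_zero]
  | monomial m c =>
    have hmon : (monomial m c : MvPolynomial (Fin 2) k) = C c * (X 0 ^ (m 0) * X 1 ^ (m 1)) := by
      rw [monomial_eq]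
      congr 1
      rw [Finsupp.prod_fintype _ _ (fun i => pow_zero _), Fin.prod_univ_two]
    rw [hmon, mul_assoc, mul_assoc, ← smul_eq_C_mul, map_smul,
      TXpow0, TXpow1 _ _ _ hc, hg]
    simp

lemma Tspan3 (hc : Commute Lx Ly) (g1 g2 g3 : MvPolynomial (Fin 2) k)
    (h1 : T Lx Ly e0 g1 = 0) (h2 : T Lx Ly e0 g2 = 0) (h3 : T Lx Ly e0 g3 = 0)
    (p : MvPolynomial (Fin 2) k) (hp : p ∈ Ideal.span {g1, g2, g3}) :
    T Lx Ly e0 p = 0 := by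
  rw [Ideal.mem_span_insert] at hp
  obtain ⟨q1, z1, hz1, rfl⟩ := hp
  rw [Ideal.mem_span_insert] at hz1
  obtain ⟨q2, z2, hz2, rfl⟩ := hz1
  rw [Ideal.mem_span_singleton'] at hz2
  obtain ⟨q3, rfl⟩ := hz2
  rw [map_add, map_add, Tqg _ _ _ hc _ h1, Tqg _ _ _ hc _ h2, Tqg _ _ _ hc _ h3]
  simp

lemma Tspan2 (hc : Commute Lx Ly) (g1 g2 : MvPolynomial (Fin 2) k)
    (h1 : T Lx Ly e0 g1 = 0) (h2 : T Lx Ly e0 g2 = 0)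
    (p : MvPolynomial (Fin 2) k) (hp : p ∈ Ideal.span {g1, g2}) :
    T Lx Ly e0 p = 0 := by
  rw [Ideal.mem_span_insert] at hp
  obtain ⟨q1, z1, hz1, rfl⟩ := hp
  rw [Ideal.mem_span_singleton'] at hz1
  obtain ⟨q2, rfl⟩ := hz1
  rw [map_add, Tqg _ _ _ hc _ h1, Tqg _ _ _ hc _ h2]
  simp

end generic

/-! ### The 7-dimensional model for `I` -/

def vec7 (v0 v1 v2 v3 v4 v5 v6 : k) : Fin 7 → k := fun i =>
  if i.val = 0 then v0 else if i.val = 1 then v1 else if i.val = 2 then v2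
  else if i.val = 3 then v3 else if i.val = 4 then v4 else if i.val = 5 then v5 else v6

def LxF (b : k) : (Fin 7 → k) →ₗ[k] (Fin 7 → k) where
  toFun v := vec7 0 0 0 0 (v 0) (v 1) (v 2 + b * v 4)
  map_add' u v := by funext i; simp only [vec7, Pi.add_apply]; split_ifs <;> ring
  map_smul' c v := by
    funext i; simp only [vec7, Pi.smul_apply, smul_eq_mul, RingHom.id_apply]
    split_ifs <;> ring

def LyF (a b : k) : (Fin 7 → k) →ₗ[k] (Fin 7 → k) where
  toFun v := vec7 0 (v 0) (v 1) (v 2 + (a*b)⁻¹ * v 3) 0 (v 4) (b⁻¹ * v 3 + v 5)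
  map_add' u v := by funext i; simp only [vec7, Pi.add_apply]; split_ifs <;> ring
  map_smul' c v := by
    funext i; simp only [vec7, Pi.smul_apply, smul_eq_mul, RingHom.id_apply]
    split_ifs <;> ring

lemma commF (a b : k) : Commute (LxF b) (LyF a b) := by
  ext v i
  fin_cases i <;>
    simp (config := { decide := true }) [LxF, LyF, vec7, Module.End.mul_apply] <;> ring

def e7 : Fin 7 → k := vec7 1 0 0 0 0 0 0

section vals7
variable (a b : k)

local notation "T7" => T (LxF b) (LyF a b) (e7 : Fin 7 → k)

lemma hw0 : T7 (1 : MvPolynomial (Fin 2) k) = vec7 1 0 0 0 0 0 0 := Tone _ _ _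

lemma hw1 : T7 (X 1 : MvPolynomial (Fin 2) k) = vec7 0 1 0 0 0 0 0 := by
  rw [show (X 1 : MvPolynomial (Fin 2) k) = X 1 * 1 by ring, TX1 _ _ _ (commF a b), Tone]
  funext i
  fin_cases i <;> simp (config := { decide := true }) [LyF, vec7, e7]

lemma hw2 : T7 ((X 1 : MvPolynomial (Fin 2) k) ^ 2) = vec7 0 0 1 0 0 0 0 := by
  rw [show ((X 1 : MvPolynomial (Fin 2) k)) ^ 2 = X 1 * (X 1 * 1) by ring,
    TX1 _ _ _ (commF a b), TX1 _ _ _ (commF a b), Tone]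
  funext i
  fin_cases i <;> simp (config := { decide := true }) [LyF, vec7, e7]

lemma hw3 : T7 ((X 1 : MvPolynomial (Fin 2) k) ^ 3) = vec7 0 0 0 1 0 0 0 := by
  rw [show ((X 1 : MvPolynomial (Fin 2) k)) ^ 3 = X 1 * (X 1 * (X 1 * 1)) by ring,
    TX1 _ _ _ (commF a b), TX1 _ _ _ (commF a b), TX1 _ _ _ (commF a b), Tone]
  funext i
  fin_cases i <;> simp (config := { decide := true }) [LyF, vec7, e7]

lemma hw4 : T7 (X 0 : MvPolynomial (Fin 2) k) = vec7 0 0 0 0 1 0 0 := by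
  rw [show (X 0 : MvPolynomial (Fin 2) k) = X 0 * 1 by ring, TX0, Tone]
  funext i
  fin_cases i <;> simp (config := { decide := true }) [LxF, vec7, e7]

lemma hw5 : T7 ((X 0 : MvPolynomial (Fin 2) k) * X 1) = vec7 0 0 0 0 0 1 0 := by
  rw [show ((X 0 : MvPolynomial (Fin 2) k)) * X 1 = X 0 * (X 1 * 1) by ring,
    TX0, TX1 _ _ _ (commF a b), Tone]
  funext i
  fin_cases i <;> simp (config := { decide := true }) [LxF, LyF, vec7, e7]

lemma hw6 : T7 ((X 0 : MvPolynomial (Fin 2) k) * X 1 ^ 2) = vec7 0 0 0 0 0 0 1 := by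
  rw [show ((X 0 : MvPolynomial (Fin 2) k)) * X 1 ^ 2 = X 0 * (X 1 * (X 1 * 1)) by ring,
    TX0, TX1 _ _ _ (commF a b), TX1 _ _ _ (commF a b), Tone]
  funext i
  fin_cases i <;> simp (config := { decide := true }) [LxF, LyF, vec7, e7]

variable (ha : a ≠ 0) (hb : b ≠ 0)
include ha hb

lemma hg1 : T7 ((X 0 : MvPolynomial (Fin 2) k) ^ 2 - C b * X 0 * X 1 ^ 2) = 0 := by
  have h1 : ((X 0 : MvPolynomial (Fin 2) k)) ^ 2 = X 0 * (X 0 * 1) := by ring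
  have h2 : (C b : MvPolynomial (Fin 2) k) * X 0 * X 1 ^ 2
      = b • (X 0 * (X 1 * (X 1 * 1))) := by rw [smul_eq_C_mul]; ring
  rw [map_sub, h1, h2, map_smul, TX0, TX0, TX0, TX1 _ _ _ (commF a b),
    TX1 _ _ _ (commF a b), Tone]
  funext i
  fin_cases i <;>
    simp (config := { decide := true }) [LxF, LyF, vec7, e7] <;> field_simp <;> ring

lemma hg2 : T7 ((X 0 : MvPolynomial (Fin 2) k) * X 1 ^ 3) = 0 := by
  have h1 : ((X 0 : MvPolynomial (Fin 2) k)) * X 1 ^ 3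
      = X 0 * (X 1 * (X 1 * (X 1 * 1))) := by ring
  rw [h1, TX0, TX1 _ _ _ (commF a b), TX1 _ _ _ (commF a b), TX1 _ _ _ (commF a b), Tone]
  funext i
  fin_cases i <;>
    simp (config := { decide := true }) [LxF, LyF, vec7, e7] <;> field_simp <;> ring

lemma hg3 : T7 ((X 1 : MvPolynomial (Fin 2) k) ^ 3 + C a * X 0 * X 1 ^ 2
    - C (a * b) * X 1 ^ 4) = 0 := by
  have h1 : ((X 1 : MvPolynomial (Fin 2) k)) ^ 3 = X 1 * (X 1 * (X 1 * 1)) := by ring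
  have h2 : (C a : MvPolynomial (Fin 2) k) * X 0 * X 1 ^ 2
      = a • (X 0 * (X 1 * (X 1 * 1))) := by rw [smul_eq_C_mul]; ring
  have h3 : (C (a * b) : MvPolynomial (Fin 2) k) * X 1 ^ 4
      = (a * b) • (X 1 * (X 1 * (X 1 * (X 1 * 1)))) := by rw [smul_eq_C_mul]; ring
  rw [map_sub, map_add, h1, h2, h3, map_smul, map_smul, TX0]
  rw [TX1 _ _ _ (commF a b), TX1 _ _ _ (commF a b), TX1 _ _ _ (commF a b),
    TX1 _ _ _ (commF a b), TX1 _ _ _ (commF a b), TX1 _ _ _ (commF a b),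
    TX1 _ _ _ (commF a b), Tone]
  funext i
  fin_cases i <;>
    simp (config := { decide := true }) [LxF, LyF, vec7, e7] <;> field_simp <;> ring

end vals7

/-! ### The 6-dimensional model for `(x², y³)` -/

def vec6 (v0 v1 v2 v3 v4 v5 : k) : Fin 6 → k := fun i =>
  if i.val = 0 then v0 else if i.val = 1 then v1 else if i.val = 2 then v2
  else if i.val = 3 then v3 else if i.val = 4 then v4 else v5

def NxF : (Fin 6 → k) →ₗ[k] (Fin 6 → k) where
  toFun v := vec6 0 0 0 (v 0) (v 1) (v 2)
  map_add' u v := by funext i; simp only [vec6, Pi.add_apply]; split_ifs <;> ring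
  map_smul' c v := by
    funext i; simp only [vec6, Pi.smul_apply, smul_eq_mul, RingHom.id_apply]
    split_ifs <;> ring

def NyF : (Fin 6 → k) →ₗ[k] (Fin 6 → k) where
  toFun v := vec6 0 (v 0) (v 1) 0 (v 3) (v 4)
  map_add' u v := by funext i; simp only [vec6, Pi.add_apply]; split_ifs <;> ring
  map_smul' c v := by
    funext i; simp only [vec6, Pi.smul_apply, smul_eq_mul, RingHom.id_apply]
    split_ifs <;> ring

lemma commN : Commute (NxF : (Fin 6 → k) →ₗ[k] (Fin 6 → k)) NyF := by
  ext v i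
  fin_cases i <;>
    simp (config := { decide := true }) [NxF, NyF, vec6, Module.End.mul_apply]

def e6 : Fin 6 → k := vec6 1 0 0 0 0 0

local notation "T6" => T (NxF : (Fin 6 → k) →ₗ[k] (Fin 6 → k)) NyF (e6 : Fin 6 → k)

lemma nw0 : T6 (1 : MvPolynomial (Fin 2) k) = vec6 1 0 0 0 0 0 := Tone _ _ _

lemma nw1 : T6 (X 1 : MvPolynomial (Fin 2) k) = vec6 0 1 0 0 0 0 := by
  rw [show (X 1 : MvPolynomial (Fin 2) k) = X 1 * 1 by ring, TX1 _ _ _ commN, Tone]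
  funext i
  fin_cases i <;> simp (config := { decide := true }) [NyF, vec6, e6]

lemma nw2 : T6 ((X 1 : MvPolynomial (Fin 2) k) ^ 2) = vec6 0 0 1 0 0 0 := by
  rw [show ((X 1 : MvPolynomial (Fin 2) k)) ^ 2 = X 1 * (X 1 * 1) by ring,
    TX1 _ _ _ commN, TX1 _ _ _ commN, Tone]
  funext i
  fin_cases i <;> simp (config := { decide := true }) [NyF, vec6, e6]

lemma nw3 : T6 (X 0 : MvPolynomial (Fin 2) k) = vec6 0 0 0 1 0 0 := by
  rw [show (X 0 : MvPolynomial (Fin 2) k) = X 0 * 1 by ring, TX0, Tone]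
  funext i
  fin_cases i <;> simp (config := { decide := true }) [NxF, vec6, e6]

lemma nw4 : T6 ((X 0 : MvPolynomial (Fin 2) k) * X 1) = vec6 0 0 0 0 1 0 := by
  rw [show ((X 0 : MvPolynomial (Fin 2) k)) * X 1 = X 0 * (X 1 * 1) by ring,
    TX0, TX1 _ _ _ commN, Tone]
  funext i
  fin_cases i <;> simp (config := { decide := true }) [NxF, NyF, vec6, e6]

lemma nw5 : T6 ((X 0 : MvPolynomial (Fin 2) k) * X 1 ^ 2) = vec6 0 0 0 0 0 1 := by
  rw [show ((X 0 : MvPolynomial (Fin 2) k)) * X 1 ^ 2 = X 0 * (X 1 * (X 1 * 1)) by ring,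
    TX0, TX1 _ _ _ commN, TX1 _ _ _ commN, Tone]
  funext i
  fin_cases i <;> simp (config := { decide := true }) [NxF, NyF, vec6, e6]

lemma ng1 : T6 ((X 0 : MvPolynomial (Fin 2) k) ^ 2) = 0 := by
  rw [show ((X 0 : MvPolynomial (Fin 2) k)) ^ 2 = X 0 * (X 0 * 1) by ring, TX0, TX0, Tone]
  funext i
  fin_cases i <;> simp (config := { decide := true }) [NxF, vec6, e6]

lemma ng2 : T6 ((X 1 : MvPolynomial (Fin 2) k) ^ 3) = 0 := by
  rw [show ((X 1 : MvPolynomial (Fin 2) k)) ^ 3 = X 1 * (X 1 * (X 1 * 1)) by ring,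
    TX1 _ _ _ commN, TX1 _ _ _ commN, TX1 _ _ _ commN, Tone]
  funext i
  fin_cases i <;> simp (config := { decide := true }) [NyF, vec6, e6]


section main
variable {k : Type*} [Field k] (a b : k)

lemma indep7 (ha : a ≠ 0) (hb : b ≠ 0) :
    LinearIndependent k (fun i : Fin 7 => Ideal.Quotient.mk
      (Ideal.span {(X 0 : MvPolynomial (Fin 2) k) ^ 2 - C b * X 0 * X 1 ^ 2,
        X 0 * X 1 ^ 3, X 1 ^ 3 + C a * X 0 * X 1 ^ 2 - C (a * b) * X 1 ^ 4})
      (![1, X 1, X 1 ^ 2, X 1 ^ 3, X 0, X 0 * X 1, X 0 * X 1 ^ 2] i)) := by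
  set I := Ideal.span {(X 0 : MvPolynomial (Fin 2) k) ^ 2 - C b * X 0 * X 1 ^ 2,
      X 0 * X 1 ^ 3, X 1 ^ 3 + C a * X 0 * X 1 ^ 2 - C (a * b) * X 1 ^ 4} with hIdef
  set M : Fin 7 → MvPolynomial (Fin 2) k :=
    ![1, X 1, X 1 ^ 2, X 1 ^ 3, X 0, X 0 * X 1, X 0 * X 1 ^ 2] with hM
  rw [Fintype.linearIndependent_iff]
  intro c hc
  set L : MvPolynomial (Fin 2) k →ₗ[k] (MvPolynomial (Fin 2) k ⧸ I) :=
    (Ideal.Quotient.mkₐ k I).toLinearMap with hL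
  have hmem : (∑ i, c i • M i) ∈ I := by
    rw [← Ideal.Quotient.eq_zero_iff_mem]
    have h1 : Ideal.Quotient.mk I (∑ i, c i • M i) = L (∑ i, c i • M i) := rfl
    have h2 : L (∑ i, c i • M i) = ∑ i, c i • L (M i) := by
      rw [map_sum]; simp_rw [map_smul]
    rw [h1, h2]
    exact hc
  have hT0 : T (LxF b) (LyF a b) (e7 : Fin 7 → k) (∑ i, c i • M i) = 0 :=
    Tspan3 _ _ _ (commF a b) _ _ _ (hg1 a b ha hb) (hg2 a b ha hb) (hg3 a b ha hb) _ hmem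
  rw [map_sum] at hT0
  simp_rw [map_smul] at hT0
  rw [Fin.sum_univ_seven] at hT0
  rw [show M 0 = 1 from rfl, show M 1 = X 1 from rfl, show M 2 = X 1 ^ 2 from rfl,
    show M 3 = X 1 ^ 3 from rfl, show M 4 = X 0 from rfl, show M 5 = X 0 * X 1 from rfl,
    show M 6 = X 0 * X 1 ^ 2 from rfl] at hT0
  rw [hw0 a b, hw1 a b, hw2 a b, hw3 a b, hw4 a b, hw5 a b, hw6 a b] at hT0
  intro i
  fin_cases i
  · simpa (config := { decide := true }) [vec7] using congrFun hT0 0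
  · simpa (config := { decide := true }) [vec7] using congrFun hT0 1
  · simpa (config := { decide := true }) [vec7] using congrFun hT0 2
  · simpa (config := { decide := true }) [vec7] using congrFun hT0 3
  · simpa (config := { decide := true }) [vec7] using congrFun hT0 4
  · simpa (config := { decide := true }) [vec7] using congrFun hT0 5
  · simpa (config := { decide := true }) [vec7] using congrFun hT0 6

lemma finrank6 : Module.finrank k (MvPolynomial (Fin 2) k ⧸
    Ideal.span {(X 0 : MvPolynomial (Fin 2) k) ^ 2, X 1 ^ 3}) = 6 := by
  set J := Ideal.span {(X 0 : MvPolynomial (Fin 2) k) ^ 2, X 1 ^ 3} with hJdef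
  set N : Fin 6 → MvPolynomial (Fin 2) k :=
    ![1, X 1, X 1 ^ 2, X 0, X 0 * X 1, X 0 * X 1 ^ 2] with hN
  have hindep : LinearIndependent k (fun i : Fin 6 => Ideal.Quotient.mk J (N i)) := by
    rw [Fintype.linearIndependent_iff]
    intro c hc
    set L : MvPolynomial (Fin 2) k →ₗ[k] (MvPolynomial (Fin 2) k ⧸ J) :=
      (Ideal.Quotient.mkₐ k J).toLinearMap with hL
    have hmem : (∑ i, c i • N i) ∈ J := by
      rw [← Ideal.Quotient.eq_zero_iff_mem]
      have h1 : Ideal.Quotient.mk J (∑ i, c i • N i) = L (∑ i, c i • N i) := rfl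
      have h2 : L (∑ i, c i • N i) = ∑ i, c i • L (N i) := by
        rw [map_sum]; simp_rw [map_smul]
      rw [h1, h2]
      exact hc
    have hT0 : T (NxF : (Fin 6 → k) →ₗ[k] (Fin 6 → k)) NyF (e6 : Fin 6 → k)
        (∑ i, c i • N i) = 0 :=
      Tspan2 _ _ _ commN _ _ ng1 ng2 _ hmem
    rw [map_sum] at hT0
    simp_rw [map_smul] at hT0
    rw [Fin.sum_univ_six] at hT0
    rw [show N 0 = 1 from rfl, show N 1 = X 1 from rfl, show N 2 = X 1 ^ 2 from rfl,
      show N 3 = X 0 from rfl, show N 4 = X 0 * X 1 from rfl,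
      show N 5 = X 0 * X 1 ^ 2 from rfl] at hT0
    rw [nw0, nw1, nw2, nw3, nw4, nw5] at hT0
    intro i
    fin_cases i
    · simpa (config := { decide := true }) [vec6] using congrFun hT0 0
    · simpa (config := { decide := true }) [vec6] using congrFun hT0 1
    · simpa (config := { decide := true }) [vec6] using congrFun hT0 2
    · simpa (config := { decide := true }) [vec6] using congrFun hT0 3
    · simpa (config := { decide := true }) [vec6] using congrFun hT0 4
    · simpa (config := { decide := true }) [vec6] using congrFun hT0 5
  have hspan : ⊤ ≤ Submodule.span k
      (Set.range (fun i : Fin 6 => Ideal.Quotient.mk J (N i))) := by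
    rintro q -
    obtain ⟨p, rfl⟩ := Ideal.Quotient.mk_surjective q
    induction p using MvPolynomial.induction_on' with
    | add p q hp hq =>
      have : Ideal.Quotient.mk J (p + q) = Ideal.Quotient.mk J p + Ideal.Quotient.mk J q :=
        map_add (Ideal.Quotient.mkₐ k J) p q
      rw [this]; exact Submodule.add_mem _ hp hq
    | monomial m c =>
      by_cases h0 : 2 ≤ m 0
      · have hJm : (monomial m c : MvPolynomial (Fin 2) k) ∈ J := by
          have hsum : m - Finsupp.single (0 : Fin 2) 2 + Finsupp.single (0 : Fin 2) 2 = m := by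
            ext j
            rw [Finsupp.add_apply, Finsupp.tsub_apply]
            rcases eq_or_ne (0 : Fin 2) j with h | h
            · rw [← h, Finsupp.single_eq_same]; omega
            · rw [Finsupp.single_eq_of_ne h.symm]; omega
          have : (monomial m c : MvPolynomial (Fin 2) k)
              = monomial (m - Finsupp.single (0 : Fin 2) 2) c * X 0 ^ 2 := by
            rw [X_pow_eq_monomial, monomial_mul, mul_one, hsum]
          rw [this, hJdef]
          exact Ideal.mul_mem_left _ _ (Ideal.subset_span (by simp))
        rw [Ideal.Quotient.eq_zero_iff_mem.mpr hJm]
        exact Submodule.zero_mem _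
      · by_cases h1 : 3 ≤ m 1
        · have hJm : (monomial m c : MvPolynomial (Fin 2) k) ∈ J := by
            have hsum : m - Finsupp.single (1 : Fin 2) 3 + Finsupp.single (1 : Fin 2) 3 = m := by
              ext j
              rw [Finsupp.add_apply, Finsupp.tsub_apply]
              rcases eq_or_ne (1 : Fin 2) j with h | h
              · rw [← h, Finsupp.single_eq_same]; omega
              · rw [Finsupp.single_eq_of_ne h.symm]; omega
            have : (monomial m c : MvPolynomial (Fin 2) k)
                = monomial (m - Finsupp.single (1 : Fin 2) 3) c * X 1 ^ 3 := by
              rw [X_pow_eq_monomial, monomial_mul, mul_one, hsum]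
            rw [this, hJdef]
            exact Ideal.mul_mem_left _ _ (Ideal.subset_span (by simp))
          rw [Ideal.Quotient.eq_zero_iff_mem.mpr hJm]
          exact Submodule.zero_mem _
        · have hmon : (monomial m c : MvPolynomial (Fin 2) k)
              = c • (X 0 ^ (m 0) * X 1 ^ (m 1)) := by
            rw [smul_eq_C_mul, monomial_eq]
            congr 1
            rw [Finsupp.prod_fintype _ _ (fun i => pow_zero _), Fin.prod_univ_two]
          push_neg at h0 h1
          have hsm : Ideal.Quotient.mk J (monomial m c)
              = c • Ideal.Quotient.mk J (X 0 ^ (m 0) * X 1 ^ (m 1)) := by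
            rw [hmon]; exact map_smul (Ideal.Quotient.mkₐ k J) c _
          rw [hsm]
          refine Submodule.smul_mem _ _ (Submodule.subset_span ?_)
          have h0' : m 0 = 0 ∨ m 0 = 1 := by omega
          have h1' : m 1 = 0 ∨ m 1 = 1 ∨ m 1 = 2 := by omega
          rcases h0' with h0' | h0' <;> rcases h1' with h1' | h1' | h1' <;> rw [h0', h1']
          · exact ⟨0, congrArg _ (by rw [show N 0 = 1 from rfl]; ring)⟩
          · exact ⟨1, congrArg _ (by rw [show N 1 = X 1 from rfl]; ring)⟩
          · exact ⟨2, congrArg _ (by rw [show N 2 = X 1 ^ 2 from rfl]; ring)⟩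
          · exact ⟨3, congrArg _ (by rw [show N 3 = X 0 from rfl]; ring)⟩
          · exact ⟨4, congrArg _ (by rw [show N 4 = X 0 * X 1 from rfl]; ring)⟩
          · exact ⟨5, congrArg _ (by rw [show N 5 = X 0 * X 1 ^ 2 from rfl]; ring)⟩
  have hbasis : Module.Basis (Fin 6) k (MvPolynomial (Fin 2) k ⧸ J) := Module.Basis.mk hindep hspan
  rw [Module.finrank_eq_card_basis hbasis, Fintype.card_fin]

end main
end Stmt9Aux

open Stmt9Aux

/-- For `a ≠ 0 ≠ b` and `I = (x² − bxy², xy³, y³ + axy² − aby⁴)`, the images of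
`1, y, y², y³, x, xy, xy²` in `k[x,y]/I` are `k`-linearly independent; in particular
`dim_k k[x,y]/I ≥ 7`, whereas `dim_k k[x,y]/(x², y³) = 6`. -/
theorem stmt9 (k : Type*) [Field k] (a b : k) (ha : a ≠ 0) (hb : b ≠ 0)
    (I : Ideal (MvPolynomial (Fin 2) k))
    (hI : I = Ideal.span {(X 0 : MvPolynomial (Fin 2) k) ^ 2 - C b * X 0 * X 1 ^ 2,
        X 0 * X 1 ^ 3, X 1 ^ 3 + C a * X 0 * X 1 ^ 2 - C (a * b) * X 1 ^ 4}) :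
    LinearIndependent k (fun i : Fin 7 => Ideal.Quotient.mk I
      (![1, X 1, X 1 ^ 2, X 1 ^ 3, X 0, X 0 * X 1, X 0 * X 1 ^ 2] i)) ∧
    7 ≤ Module.rank k (MvPolynomial (Fin 2) k ⧸ I) ∧
    Module.finrank k (MvPolynomial (Fin 2) k ⧸
        Ideal.span {(X 0 : MvPolynomial (Fin 2) k) ^ 2, X 1 ^ 3}) = 6 := by
  subst hI
  have h1 := indep7 a b ha hb
  refine ⟨h1, ?_, finrank6⟩
  have h2 := h1.cardinal_lift_le_rank
  simpa using h2
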